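/- For nonnegative integers k and m and arbitrary integer l, ∏_{j=1}^k (−q^{l+j}; q)_m = (C_{k+l} C_{l+m})/(C_l C_{k+l+m}) · H̃_q^−(|l|) H̃_q^−(|k+l+m|) / (H̃_q^−(|k+l|) H̃_q^−(|l+m|)), where C_n = 1 for n ≥ 0 and C_n = 2^n q^{(n−n³)/6} for n < 0, and H̃_q^−(n) = H̃_{q²}(n)/H̃_q(n). -/

import Mathlib

open Finset

/-- q-Pochhammer symbol `(x;q)_n = ∏_{j=0}^{n-1} (1 - x q^j)`. -/
def qPoch {K : Type*} [Field K] (q x : K) (n : ℕ) : K :=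
  ∏ j ∈ Finset.range n, (1 - x * q ^ j)

/-- q-hyperfactorial `H̃_q(n) = ∏_{j=1}^n (q;q)_{j-1}`. -/
def HtN {K : Type*} [Field K] (q : K) (n : ℕ) : K :=
  ∏ j ∈ Finset.range n, qPoch q q j

/-- `H̃_q^−(n) = H̃_{q²}(n)/H̃_q(n)`. -/
def HtNeg {K : Type*} [Field K] (q : K) (n : ℕ) : K :=
  HtN (q ^ 2) n / HtN q n

/-- `C_n = 1` for `n ≥ 0` and `C_n = 2^n q^{(n−n³)/6}` for `n < 0`. -/
def Cc {K : Type*} [Field K] (q : K) (n : ℤ) : K :=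
  if 0 ≤ n then 1 else (2 : K) ^ n * q ^ ((n - n ^ 3) / 6)

namespace HtAux

def ff (p : ℕ) : ℤ := ((p : ℤ) ^ 3 - (p : ℤ)) / 6

variable {K : Type*} [Field K] (q : K)

def Bb (n : ℕ) : K := ∏ i ∈ Finset.range n, (1 + q ^ (i + 1))

def Dd (n : ℕ) : K := ∏ j ∈ Finset.range n, Bb q j

def Gg (n : ℤ) : K := HtNeg q n.natAbs / Cc q n

lemma qPoch_sq (n : ℕ) : qPoch (q ^ 2) (q ^ 2) n = Bb q n * qPoch q q n := by
  unfold qPoch Bb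
  rw [← Finset.prod_mul_distrib]
  refine Finset.prod_congr rfl fun i _ => ?_
  ring

lemma HtN_ne (hq1 : ∀ i : ℕ, 0 < i → q ^ i ≠ 1) (n : ℕ) : HtN q n ≠ 0 := by
  unfold HtN qPoch
  rw [Finset.prod_ne_zero_iff]
  intro j _
  rw [Finset.prod_ne_zero_iff]
  intro i _ h
  exact hq1 (i + 1) (Nat.succ_pos i) (by rw [pow_succ']; exact (sub_eq_zero.mp h).symm)

lemma HtNeg_eq (hq1 : ∀ i : ℕ, 0 < i → q ^ i ≠ 1) (n : ℕ) :
    HtNeg q n = Dd q n := by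
  have h : HtN (q ^ 2) n = Dd q n * HtN q n := by
    unfold HtN Dd
    rw [← Finset.prod_mul_distrib]
    exact Finset.prod_congr rfl fun j _ => qPoch_sq q j
  rw [HtNeg, h, mul_div_assoc, div_self (HtN_ne q hq1 n), mul_one]

lemma Bb_ne (hqn : ∀ i : ℕ, 0 < i → q ^ i ≠ -1) (n : ℕ) :
    Bb q n ≠ 0 := by
  unfold Bb
  rw [Finset.prod_ne_zero_iff]
  intro i _ h
  exact hqn (i + 1) (Nat.succ_pos i) (eq_neg_of_add_eq_zero_right h)

lemma Dd_ne (hqn : ∀ i : ℕ, 0 < i → q ^ i ≠ -1) (n : ℕ) :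
    Dd q n ≠ 0 := by
  unfold Dd
  rw [Finset.prod_ne_zero_iff]
  exact fun j _ => Bb_ne q hqn j

lemma Cc_ne (hq0 : q ≠ 0) (h2 : (2 : K) ≠ 0) (n : ℤ) : Cc q n ≠ 0 := by
  unfold Cc
  split
  · exact one_ne_zero
  · exact mul_ne_zero (zpow_ne_zero _ h2) (zpow_ne_zero _ hq0)

lemma Gg_ne (hq0 : q ≠ 0) (h2 : (2 : K) ≠ 0)
    (hq : ∀ n : ℕ, 0 < n → q ^ n ≠ 1 ∧ q ^ n ≠ -1) (n : ℤ) : Gg q n ≠ 0 := by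
  have h1 : ∀ i : ℕ, 0 < i → q ^ i ≠ 1 := fun i hi => (hq i hi).1
  have hn : ∀ i : ℕ, 0 < i → q ^ i ≠ -1 := fun i hi => (hq i hi).2
  unfold Gg
  rw [HtNeg_eq q h1]
  exact div_ne_zero (Dd_ne q hn _) (Cc_ne q hq0 h2 n)

lemma dvd6 (p : ℤ) : (6 : ℤ) ∣ p ^ 3 - p := by
  have : ((p ^ 3 - p : ℤ) : ZMod 6) = 0 := by
    push_cast
    generalize ((p : ZMod 6)) = x
    revert x
    decide
  exact (ZMod.intCast_zmod_eq_zero_iff_dvd _ 6).mp this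

lemma Cc_neg (p : ℕ) :
    Cc q (-(p : ℤ)) = (2 : K) ^ (-(p : ℤ)) * q ^ (ff p) := by
  rcases Nat.eq_zero_or_pos p with h | h
  · subst h; simp [Cc, ff]
  · unfold Cc ff
    rw [if_neg (by omega)]
    have h3 : (-(p : ℤ) - (-(p : ℤ)) ^ 3) = (p : ℤ) ^ 3 - p := by ring
    rw [h3]

lemma Gg_neg (hq1 : ∀ i : ℕ, 0 < i → q ^ i ≠ 1) (p : ℕ) :
    Gg q (-(p : ℤ)) = Dd q p * (2 : K) ^ (p : ℤ) * q ^ (-(ff p)) := by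
  unfold Gg
  rw [Int.natAbs_neg, Int.natAbs_natCast, HtNeg_eq q hq1, Cc_neg,
    div_eq_mul_inv, mul_inv, ← zpow_neg, ← zpow_neg, neg_neg, mul_assoc]

lemma Gg_nat (hq1 : ∀ i : ℕ, 0 < i → q ^ i ≠ 1) (p : ℕ) :
    Gg q (p : ℤ) = Dd q p := by
  unfold Gg
  rw [Int.natAbs_natCast, HtNeg_eq q hq1, Cc, if_pos (by positivity), div_one]

lemma Dd_succ (n : ℕ) : Dd q (n + 1) = Dd q n * Bb q n := by
  unfold Dd; rw [Finset.prod_range_succ]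

lemma Bb_succ (n : ℕ) : Bb q (n + 1) = Bb q n * (1 + q ^ (n + 1)) := by
  unfold Bb; rw [Finset.prod_range_succ]

lemma ff_rel (r : ℕ) : ff r + ff (r + 2) = 2 * ff (r + 1) + ((r : ℤ) + 1) := by
  obtain ⟨x, hx⟩ := dvd6 (r : ℤ)
  obtain ⟨y, hy⟩ := dvd6 ((r : ℤ) + 1)
  obtain ⟨z, hz⟩ := dvd6 ((r : ℤ) + 2)
  have hax : ff r = x := by unfold ff; rw [hx]; omega
  have hby : ff (r + 1) = y := by unfold ff; push_cast; rw [hy]; omega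
  have hcz : ff (r + 2) = z := by unfold ff; push_cast; rw [hz]; omega
  rw [hax, hby, hcz]
  have : 6 * (x + z) = 6 * (2 * y + ((r : ℤ) + 1)) := by
    linear_combination -hx - hz + 2 * hy
  omega

lemma key (hq0 : q ≠ 0) (h2 : (2 : K) ≠ 0)
    (hq : ∀ n : ℕ, 0 < n → q ^ n ≠ 1 ∧ q ^ n ≠ -1) (n : ℤ) :
    Gg q n * Gg q (n + 2) = (1 + q ^ (n + 1)) * (Gg q (n + 1)) ^ 2 := by
  have h1 : ∀ i : ℕ, 0 < i → q ^ i ≠ 1 := fun i hi => (hq i hi).1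
  obtain ⟨p, rfl | rfl⟩ := Int.eq_nat_or_neg n
  · have e1 : ((p : ℤ) + 1) = ((p + 1 : ℕ) : ℤ) := by push_cast; ring
    have e2 : ((p : ℤ) + 2) = ((p + 2 : ℕ) : ℤ) := by push_cast; ring
    rw [e1, e2, Gg_nat q h1, Gg_nat q h1, Gg_nat q h1, zpow_natCast,
      Dd_succ, Dd_succ, Bb_succ]
    ring
  · rcases Nat.lt_or_ge p 2 with hp | hp
    · interval_cases p
      · norm_num
        rw [show ((2:ℤ)) = ((2:ℕ):ℤ) by norm_num, show ((1:ℤ)) = ((1:ℕ):ℤ) by norm_num,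
          show ((0:ℤ)) = ((0:ℕ):ℤ) by norm_num, Gg_nat q h1, Gg_nat q h1, Gg_nat q h1]
        simp [Dd, Bb, Finset.prod_range_succ]
      · have e0 : (-((1:ℕ):ℤ)) + 1 = ((0:ℕ):ℤ) := by norm_num
        have e1 : (-((1:ℕ):ℤ)) + 2 = ((1:ℕ):ℤ) := by norm_num
        rw [e0, e1, Gg_nat q h1, Gg_nat q h1, Gg_neg q h1]
        simp [Dd, Bb, Cc_neg, ff, Finset.prod_range_succ]
        norm_num
    · obtain ⟨r, rfl⟩ : ∃ r, p = r + 2 := ⟨p - 2, by omega⟩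
      push_cast
      rw [show (-((r:ℤ)+2)+2) = -(r:ℤ) from by ring,
        show (-((r:ℤ)+2)+1) = -((r:ℤ)+1) from by ring]
      have G0 : Gg q (-(r:ℤ)) = Dd q r * (2:K)^((r:ℤ)) * q^(-(ff r)) := Gg_neg q h1 r
      have G1 : Gg q (-((r:ℤ)+1)) = Dd q (r+1) * (2:K)^((r:ℤ)+1) * q^(-(ff (r+1))) := by
        have := Gg_neg q h1 (r+1); push_cast at this ⊢; exact this
      have G2 : Gg q (-((r:ℤ)+2)) = Dd q (r+2) * (2:K)^((r:ℤ)+2) * q^(-(ff (r+2))) := by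
        have := Gg_neg q h1 (r+2); push_cast at this ⊢; exact this
      rw [G0, G1, G2, Dd_succ, Dd_succ, Bb_succ]
      have hac' : q^(-(ff r)) * q^(-(ff (r+2))) =
          (q^(-(ff (r+1))))^2 * q^(-((r:ℤ)+1)) := by
        have hrel := ff_rel r
        rw [sq, ← zpow_add₀ hq0, ← zpow_add₀ hq0, ← zpow_add₀ hq0]
        congr 1
        omega
      have h2s' : (2:K)^((r:ℤ)+2) * (2:K)^((r:ℤ)) = ((2:K)^((r:ℤ)+1))^2 := by
        rw [sq, ← zpow_add₀ h2, ← zpow_add₀ h2]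
        congr 1
        ring
      have hXY : q^(-((r:ℤ)+1)) * q^(r+1) = 1 := by
        rw [← zpow_natCast q (r+1), ← zpow_add₀ hq0,
          show (-((r:ℤ)+1) + ((r+1:ℕ):ℤ)) = 0 from by push_cast; ring, zpow_zero]
      linear_combination
        (Dd q r)^2 * (Bb q r)^2 * (1 + q^(r+1)) * (q^(-(ff r)) * q^(-(ff (r+2)))) * h2s'
        + (Dd q r)^2 * (Bb q r)^2 * (1 + q^(r+1)) * (((2:K)^((r:ℤ)+1))^2) * hac'
        + (Dd q r)^2 * (Bb q r)^2 * (((2:K)^((r:ℤ)+1))^2) * ((q^(-(ff (r+1))))^2) * hXY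



lemma qPoch_succ (x : K) (m : ℕ) :
    qPoch q x (m + 1) = qPoch q x m * (1 - x * q ^ m) := by
  unfold qPoch; rw [Finset.prod_range_succ]

lemma lemA (hq0 : q ≠ 0) (h2 : (2 : K) ≠ 0)
    (hq : ∀ n : ℕ, 0 < n → q ^ n ≠ 1 ∧ q ^ n ≠ -1) (n : ℤ) (m : ℕ) :
    qPoch q (-(q ^ (n + 1))) m =
      Gg q (n + m + 1) * Gg q n / (Gg q (n + 1) * Gg q (n + m)) := by
  have gne : ∀ z : ℤ, Gg q z ≠ 0 := Gg_ne q hq0 h2 hq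
  induction m with
  | zero =>
    rw [Nat.cast_zero, add_zero]
    unfold qPoch
    rw [Finset.prod_range_zero]
    exact (div_self (mul_ne_zero (gne _) (gne _))).symm
  | succ m ih =>
    have hx : (1 : K) - -q ^ (n + 1) * q ^ m = 1 + q ^ (n + (m : ℤ) + 1) := by
      rw [neg_mul, sub_neg_eq_add, ← zpow_natCast q m, ← zpow_add₀ hq0,
        show n + 1 + (m : ℤ) = n + (m : ℤ) + 1 from by ring]
    rw [qPoch_succ, ih, hx,
      show (((m : ℕ) + 1 : ℕ) : ℤ) = (m : ℤ) + 1 from by push_cast; ring,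
      show n + ((m : ℤ) + 1) + 1 = n + (m : ℤ) + 2 from by ring,
      show n + ((m : ℤ) + 1) = n + (m : ℤ) + 1 from by ring]
    have hpow : (1 : K) + q ^ (n + (m : ℤ) + 1) =
        Gg q (n + m) * Gg q (n + m + 2) / (Gg q (n + m + 1)) ^ 2 := by
      rw [eq_div_iff (pow_ne_zero 2 (gne _))]
      exact (key q hq0 h2 hq (n + m)).symm
    rw [hpow]
    have a1 := gne n
    have a2 := gne (n + 1)
    have a3 := gne (n + m)
    have a4 := gne (n + m + 1)
    have a5 := gne (n + m + 2)
    set A := Gg q n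
    set B := Gg q (n + 1)
    set C := Gg q (n + (m : ℤ))
    set D := Gg q (n + (m : ℤ) + 1)
    set E := Gg q (n + (m : ℤ) + 2)
    field_simp

lemma lemB (hq0 : q ≠ 0) (h2 : (2 : K) ≠ 0)
    (hq : ∀ n : ℕ, 0 < n → q ^ n ≠ 1 ∧ q ^ n ≠ -1) (l : ℤ) (m k : ℕ) :
    ∏ j ∈ Finset.range k, qPoch q (-(q ^ (l + (j : ℤ) + 1))) m =
      Gg q l * Gg q (l + k + m) / (Gg q (l + k) * Gg q (l + m)) := by
  have gne : ∀ z : ℤ, Gg q z ≠ 0 := Gg_ne q hq0 h2 hq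
  induction k with
  | zero =>
    rw [Nat.cast_zero, add_zero, Finset.prod_range_zero]
    exact (div_self (mul_ne_zero (gne _) (gne _))).symm
  | succ k ih =>
    rw [Finset.prod_range_succ, ih, lemA q hq0 h2 hq (l + (k : ℤ)) m,
      show (((k : ℕ) + 1 : ℕ) : ℤ) = (k : ℤ) + 1 from by push_cast; ring,
      show l + ((k : ℤ) + 1) + (m : ℤ) = l + (k : ℤ) + (m : ℤ) + 1 from by ring,
      show l + ((k : ℤ) + 1) = l + (k : ℤ) + 1 from by ring]
    have a1 := gne l
    have a2 := gne (l + k)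
    have a3 := gne (l + m)
    have a4 := gne (l + k + m)
    have a5 := gne (l + k + 1)
    have a6 := gne (l + k + m + 1)
    set A := Gg q l
    set B := Gg q (l + (k : ℤ))
    set C := Gg q (l + (m : ℤ))
    set D := Gg q (l + (k : ℤ) + (m : ℤ))
    set E := Gg q (l + (k : ℤ) + 1)
    set F := Gg q (l + (k : ℤ) + (m : ℤ) + 1)
    field_simp

end HtAux

/-- `∏_{j=1}^k (−q^{l+j};q)_m = (C_{k+l} C_{l+m})/(C_l C_{k+l+m})
   · H̃_q^−(|l|) H̃_q^−(|k+l+m|) / (H̃_q^−(|k+l|) H̃_q^−(|l+m|))`. -/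
theorem htilde_neg_prod {K : Type*} [Field K] (q : K) (k m : ℕ) (l : ℤ)
    (hq0 : q ≠ 0) (h2 : (2 : K) ≠ 0)
    (hq : ∀ n : ℕ, 0 < n → q ^ n ≠ 1 ∧ q ^ n ≠ -1) :
    ∏ j ∈ Finset.range k, qPoch q (-(q ^ (l + (j : ℤ) + 1))) m =
      (Cc q ((k : ℤ) + l) * Cc q (l + (m : ℤ))) /
          (Cc q l * Cc q ((k : ℤ) + l + (m : ℤ))) *
        (HtNeg q l.natAbs * HtNeg q ((k : ℤ) + l + (m : ℤ)).natAbs) /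
        (HtNeg q ((k : ℤ) + l).natAbs * HtNeg q (l + (m : ℤ)).natAbs) := by
  have h1 : ∀ i : ℕ, 0 < i → q ^ i ≠ 1 := fun i hi => (hq i hi).1
  have hn : ∀ i : ℕ, 0 < i → q ^ i ≠ -1 := fun i hi => (hq i hi).2
  rw [HtAux.lemB q hq0 h2 hq l m k,
    show (k : ℤ) + l + (m : ℤ) = l + (k : ℤ) + (m : ℤ) from by ring,
    show (k : ℤ) + l = l + (k : ℤ) from by ring]
  have hH : ∀ z : ℤ, HtNeg q z.natAbs ≠ 0 := fun z => by
    rw [HtAux.HtNeg_eq q h1]; exact HtAux.Dd_ne q hn _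
  have hC : ∀ z : ℤ, Cc q z ≠ 0 := HtAux.Cc_ne q hq0 h2
  unfold HtAux.Gg
  have b1 := hH l
  have b2 := hH (l + k)
  have b3 := hH (l + m)
  have b4 := hH (l + k + m)
  have c1 := hC l
  have c2 := hC (l + k)
  have c3 := hC (l + m)
  have c4 := hC (l + k + m)
  set A := HtNeg q l.natAbs
  set B := HtNeg q (l + (k : ℤ)).natAbs
  set C := HtNeg q (l + (m : ℤ)).natAbs
  set D := HtNeg q (l + (k : ℤ) + (m : ℤ)).natAbs
  set A' := Cc q l
  set B' := Cc q (l + (k : ℤ))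
  set C' := Cc q (l + (m : ℤ))
  set D' := Cc q (l + (k : ℤ) + (m : ℤ))
  field_simp
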